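/- Proposition 2 of the paper (entropy production bound for maximally correlating measurements, classical form): if the measurement-disturbance probabilities satisfy q n n = C for every n with 1/d ≤ C ≤ 1 and d ≥ 2, then the entropy change ΔS₀ = (∑ l, Real.negMulLog (r l)) − (∑ n, Real.negMulLog (p n)) produced by the first non-ideal measurement, where r l = ∑ n, p n * q l n, satisfies ΔS₀ ≤ (1 − C) * Real.log (d − 1) + Real.binEntropy C. -/
import Mathlib


open Finset

private lemma col_entropy_bound (d : ℕ) (hd : 2 ≤ d) (f : Fin d → ℝ)
    (hf0 : ∀ l, 0 ≤ f l) (hf1 : ∑ l, f l = 1) (n : Fin d) (C : ℝ)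
    (hC1 : C ≤ 1) (hfC : f n = C) :
    ∑ l, Real.negMulLog (f l) ≤ (1 - C) * Real.log (d - 1) + Real.binEntropy C := by
  have hd1 : (1 : ℝ) ≤ (d : ℝ) - 1 := by
    have : (2 : ℝ) ≤ d := by exact_mod_cast hd
    linarith
  have hcard : (univ.erase n).card = d - 1 := by
    simp [Finset.card_erase_of_mem]
  have hcardR : ((univ.erase n).card : ℝ) = (d : ℝ) - 1 := by
    rw [hcard]
    have : (1 : ℕ) ≤ d := by omega
    push_cast [Nat.cast_sub this]
    ring
  have hdpos : (0 : ℝ) < (d : ℝ) - 1 := by linarith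
  have hsum : ∑ l ∈ univ.erase n, f l = 1 - C := by
    have := Finset.add_sum_erase univ f (Finset.mem_univ n)
    rw [hfC] at this
    linarith [hf1 ▸ this]
  -- Jensen on the erased set with uniform weights
  have hjensen : ∑ l ∈ univ.erase n, ((d : ℝ) - 1)⁻¹ • Real.negMulLog (f l) ≤
      Real.negMulLog (∑ l ∈ univ.erase n, ((d : ℝ) - 1)⁻¹ • f l) := by
    apply Real.concaveOn_negMulLog.le_map_sum
    · intro i _; positivity
    · rw [Finset.sum_const, nsmul_eq_mul, hcardR]
      field_simp
    · intro i _; exact hf0 i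
  have havg : ∑ l ∈ univ.erase n, ((d : ℝ) - 1)⁻¹ • f l = (1 - C) / ((d : ℝ) - 1) := by
    simp only [smul_eq_mul]
    rw [← Finset.mul_sum, hsum]; ring
  have hC0 : 0 ≤ 1 - C := by linarith
  have key : ∑ l ∈ univ.erase n, Real.negMulLog (f l) ≤
      ((d : ℝ) - 1) * Real.negMulLog ((1 - C) / ((d : ℝ) - 1)) := by
    rw [havg] at hjensen
    have := mul_le_mul_of_nonneg_left hjensen (le_of_lt hdpos)
    rw [Finset.mul_sum] at this
    calc ∑ l ∈ univ.erase n, Real.negMulLog (f l)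
        = ∑ l ∈ univ.erase n, ((d:ℝ)-1) * (((d : ℝ) - 1)⁻¹ • Real.negMulLog (f l)) := by
          apply Finset.sum_congr rfl; intro i _
          rw [smul_eq_mul, ← mul_assoc, mul_inv_cancel₀ (ne_of_gt hdpos), one_mul]
      _ ≤ ((d : ℝ) - 1) * Real.negMulLog ((1 - C) / ((d : ℝ) - 1)) := this
  have hval : ((d : ℝ) - 1) * Real.negMulLog ((1 - C) / ((d : ℝ) - 1)) =
      (1 - C) * Real.log ((d : ℝ) - 1) + Real.negMulLog (1 - C) := by
    rcases eq_or_lt_of_le hC0 with h | h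
    · rw [← h]; simp [Real.negMulLog]
    · unfold Real.negMulLog
      rw [Real.log_div (ne_of_gt h) (ne_of_gt hdpos)]
      field_simp
      ring
  have hsplit : ∑ l, Real.negMulLog (f l) =
      Real.negMulLog C + ∑ l ∈ univ.erase n, Real.negMulLog (f l) := by
    rw [← hfC]
    exact (Finset.add_sum_erase univ _ (Finset.mem_univ n)).symm
  rw [hsplit, Real.binEntropy_eq_negMulLog_add_negMulLog_one_sub]
  have : (d : ℝ) - 1 = ((d : ℕ) : ℝ) - 1 := rfl
  linarith [key, hval.le, hval.ge]

/-- Proposition 2 (entropy production bound for maximally correlating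
measurements, classical form): if `q n n = C` for every `n` with
`1/d ≤ C ≤ 1` and `d ≥ 2`, then the entropy change `ΔS₀` produced by the
first non-ideal measurement satisfies
`ΔS₀ ≤ (1 − C) * log (d − 1) + binEntropy C`. -/
theorem entropy_production_bound
    (d : ℕ) (hd : 2 ≤ d) (E0 : Fin d → ℝ) (β : ℝ) (hβ : 0 < β)
    (p : Fin d → ℝ)
    (hp : ∀ n, p n = Real.exp (-β * E0 n) / ∑ k, Real.exp (-β * E0 k))
    (q : Fin d → Fin d → ℝ)
    (hq0 : ∀ l n, 0 ≤ q l n) (hq1 : ∀ n, ∑ l, q l n = 1)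
    (C : ℝ) (hCd : 1 / (d : ℝ) ≤ C) (hC1 : C ≤ 1) (hqC : ∀ n, q n n = C)
    (r : Fin d → ℝ) (hr : ∀ l, r l = ∑ n, p n * q l n) :
    (∑ l, Real.negMulLog (r l)) - (∑ n, Real.negMulLog (p n)) ≤
      (1 - C) * Real.log (d - 1) + Real.binEntropy C := by
  have hZpos : 0 < ∑ k, Real.exp (-β * E0 k) := by
    apply Finset.sum_pos (fun k _ => Real.exp_pos _)
    exact Finset.univ_nonempty_iff.mpr ⟨⟨0, by omega⟩⟩
  have hp0 : ∀ n, 0 ≤ p n := fun n => by rw [hp n]; positivity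
  have hpsum : ∑ n, p n = 1 := by
    simp only [hp]
    rw [← Finset.sum_div, div_self (ne_of_gt hZpos)]
  -- Step A: negMulLog (r l) ≤ ∑ n, negMulLog (p n * q l n)
  have stepA : ∀ l, Real.negMulLog (r l) ≤ ∑ n, Real.negMulLog (p n * q l n) := by
    intro l
    have hterm0 : ∀ n, 0 ≤ p n * q l n := fun n => mul_nonneg (hp0 n) (hq0 l n)
    have hrl : Real.negMulLog (r l) = ∑ n, -(p n * q l n) * Real.log (r l) := by
      rw [Real.negMulLog, hr l, neg_mul, Finset.sum_mul, ← Finset.sum_neg_distrib]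
      simp [neg_mul]
    rw [hrl]
    apply Finset.sum_le_sum
    intro n _
    rcases eq_or_lt_of_le (hterm0 n) with h | h
    · rw [← h]; simp [Real.negMulLog]
    · have hle : p n * q l n ≤ r l := by
        rw [hr l]
        exact Finset.single_le_sum (fun i _ => hterm0 i) (Finset.mem_univ n)
      have := Real.log_le_log (by exact h) hle
      rw [Real.negMulLog, neg_mul, neg_mul, neg_le_neg_iff]
      exact mul_le_mul_of_nonneg_left this (le_of_lt h)
  -- Step B: the joint entropy decomposition
  have stepB : ∑ l, ∑ n, Real.negMulLog (p n * q l n) =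
      (∑ n, Real.negMulLog (p n)) + ∑ n, p n * ∑ l, Real.negMulLog (q l n) := by
    rw [Finset.sum_comm]
    rw [← Finset.sum_add_distrib]
    apply Finset.sum_congr rfl
    intro n _
    simp only [Real.negMulLog_mul]
    rw [Finset.sum_add_distrib, ← Finset.sum_mul, hq1 n, one_mul, Finset.mul_sum]
  have colbound : ∀ n : Fin d, ∑ l, Real.negMulLog (q l n) ≤
      (1 - C) * Real.log ((d : ℝ) - 1) + Real.binEntropy C :=
    fun n => col_entropy_bound d hd (fun l => q l n) (fun l => hq0 l n) (hq1 n) n C hC1 (hqC n)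
  have final : ∑ n, p n * ∑ l, Real.negMulLog (q l n) ≤
      (1 - C) * Real.log ((d : ℝ) - 1) + Real.binEntropy C := by
    calc ∑ n, p n * ∑ l, Real.negMulLog (q l n)
        ≤ ∑ n, p n * ((1 - C) * Real.log ((d : ℝ) - 1) + Real.binEntropy C) := by
          apply Finset.sum_le_sum
          intro n _
          exact mul_le_mul_of_nonneg_left (colbound n) (hp0 n)
      _ = (1 - C) * Real.log ((d : ℝ) - 1) + Real.binEntropy C := by
          rw [← Finset.sum_mul, hpsum, one_mul]
  have sumA : ∑ l, Real.negMulLog (r l) ≤ ∑ l, ∑ n, Real.negMulLog (p n * q l n) :=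
    Finset.sum_le_sum (fun l _ => stepA l)
  rw [stepB] at sumA
  linarith
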